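/- Let p be a prime and let G = ZMod p × ZMod p (written additively). If f : G → ℂ satisfies ∑_{t ∈ ZMod p} f(x + γ(t)) = 0 for every nontrivial group homomorphism γ : ZMod p → G and every x ∈ G, then f = 0. (The length-p Radon transform R_p is injective on C_p × C_p.) -/

import Mathlib

theorem radon_injective_Cp_sq (p : ℕ) [Fact p.Prime] (f : ZMod p × ZMod p → ℂ)
    (h : ∀ γ : ZMod p →+ ZMod p × ZMod p, γ ≠ 0 → ∀ x : ZMod p × ZMod p,
      ∑ t : ZMod p, f (x + γ t) = 0) :
    f = 0 := by
  have hp1 : (1 : ZMod p) ≠ 0 := one_ne_zero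
  -- lines with slope b : γ t = (t, t*b)
  have hline : ∀ b : ZMod p, ∀ x, ∑ t : ZMod p, f (x + (t, t * b)) = 0 := by
    intro b x
    have hne : (AddMonoidHom.id (ZMod p)).prod (AddMonoidHom.mulRight b) ≠ 0 := by
      intro hγ
      have h1 := DFunLike.congr_fun hγ (1 : ZMod p)
      simp [AddMonoidHom.prod_apply, Prod.ext_iff] at h1
    have := h _ hne x
    simpa [AddMonoidHom.prod_apply, AddMonoidHom.mulRight, mul_comm] using this
  -- vertical line : γ t = (0, t)
  have hvert : ∀ x, ∑ t : ZMod p, f (x + (0, t)) = 0 := by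
    intro x
    have hne : (0 : ZMod p →+ ZMod p).prod (AddMonoidHom.id (ZMod p)) ≠ 0 := by
      intro hγ
      have h1 := DFunLike.congr_fun hγ (1 : ZMod p)
      simp [AddMonoidHom.prod_apply, Prod.ext_iff] at h1
    have := h _ hne x
    simpa [AddMonoidHom.prod_apply] using this
  -- total sum is zero
  have hS : ∑ y : ZMod p × ZMod p, f y = 0 := by
    have h0 : ∀ v : ZMod p, ∑ t : ZMod p, f (t, v) = 0 := by
      intro v
      simpa [Prod.mk_add_mk] using hline 0 (0, v)
    rw [Fintype.sum_prod_type_right]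
    exact Finset.sum_eq_zero fun v _ => h0 v
  funext x
  -- sum the slope-b line conditions over all b
  have key : ∑ b : ZMod p, ∑ t : ZMod p, f (x + (t, t * b)) = 0 := by simp [hline]
  rw [Finset.sum_comm] at key
  -- split off t = 0
  rw [← Finset.add_sum_erase _ _ (Finset.mem_univ (0 : ZMod p))] at key
  have h0term : ∑ b : ZMod p, f (x + ((0 : ZMod p), (0:ZMod p) * b)) = (p : ℂ) * f x := by
    simp [Finset.card_univ, ZMod.card, Prod.mk_zero_zero]
  have hrest : ∀ t ∈ Finset.univ.erase (0 : ZMod p),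
      ∑ b : ZMod p, f (x + (t, t * b)) = ∑ v : ZMod p, f (x + (t, v)) := by
    intro t ht
    have htne : t ≠ 0 := Finset.ne_of_mem_erase ht
    exact Equiv.sum_comp (Equiv.mulLeft₀ t htne) (fun v => f (x + (t, v)))
  rw [Finset.sum_congr rfl hrest] at key
  have hfull : ∑ t : ZMod p, ∑ v : ZMod p, f (x + (t, v)) = 0 := by
    have h1 : ∑ q : ZMod p × ZMod p, f (x + q) = 0 :=
      (Equiv.sum_comp (Equiv.addLeft x) f).trans hS
    have h2 := Fintype.sum_prod_type (f := fun q : ZMod p × ZMod p => f (x + q))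
    exact h2.symm.trans h1
  have herase : ∑ t ∈ Finset.univ.erase (0 : ZMod p), ∑ v : ZMod p, f (x + (t, v))
      = - ∑ v : ZMod p, f (x + ((0 : ZMod p), v)) := by
    have := Finset.add_sum_erase Finset.univ
      (fun t => ∑ v : ZMod p, f (x + (t, v))) (Finset.mem_univ (0 : ZMod p))
    rw [hfull] at this
    linear_combination this
  rw [h0term, herase, hvert x, neg_zero, add_zero] at key
  have hpne : (p : ℂ) ≠ 0 := by
    exact_mod_cast (Fact.out : p.Prime).ne_zero
  have : f x = 0 := (mul_eq_zero.mp key).resolve_left hpne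
  simpa using this
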